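/- Let C ∈ ℝ^{p×p} be skew-symmetric with 0 < ‖C‖₂ < π. Then ‖exp_m(C) − I‖₂ < ‖C‖₂. -/

import Mathlib

open Matrix

/-- Spectral norm (largest singular value) of a real matrix: the operator norm of the
induced linear map between Euclidean spaces. -/
noncomputable def sNorm {m n : Type*} [Fintype m] [Fintype n] [DecidableEq n]
    (A : Matrix m n ℝ) : ℝ :=
  ‖(Matrix.toEuclideanLin A).toContinuousLinearMap‖

open scoped RealInnerProductSpace

set_option maxHeartbeats 2000000 in
open NormedSpace in
lemma clm_aux {p : ℕ} (L : EuclideanSpace ℝ (Fin p) →L[ℝ] EuclideanSpace ℝ (Fin p))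
    (hL : star L = -L) (h0 : 0 < ‖L‖) :
    ‖NormedSpace.exp L - 1‖ < ‖L‖ := by
  let +nondep : NormedAlgebra ℚ (EuclideanSpace ℝ (Fin p) →L[ℝ] EuclideanSpace ℝ (Fin p)) :=
    .restrictScalars ℚ ℝ _
  -- exp (t • L) is an isometry
  have hster : ∀ t : ℝ, star (exp (t • L)) * exp (t • L) = 1 := by
    intro t
    have h1 : star (t • L) = -(t • L) := by
      rw [star_smul, hL, star_trivial, smul_neg]
    rw [NormedSpace.star_exp, h1, ← NormedSpace.exp_add_of_commute ((Commute.refl (t • L)).neg_left),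
      neg_add_cancel, NormedSpace.exp_zero]
  have hiso : ∀ (t : ℝ) (y : EuclideanSpace ℝ (Fin p)), ‖exp (t • L) y‖ = ‖y‖ := by
    intro t y
    have h2 : ⟪(star (exp (t • L))) ((exp (t • L)) y), y⟫ = ⟪(exp (t • L)) y, (exp (t • L)) y⟫ := by
      rw [ContinuousLinearMap.star_eq_adjoint]
      exact ContinuousLinearMap.adjoint_inner_left _ _ _
    rw [← ContinuousLinearMap.mul_apply, hster t, ContinuousLinearMap.one_apply] at h2
    have h3 : ‖y‖ ^ 2 = ‖exp (t • L) y‖ ^ 2 := by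
      rw [← real_inner_self_eq_norm_sq, ← real_inner_self_eq_norm_sq, h2]
    nlinarith [norm_nonneg (exp (t • L) y), norm_nonneg y]
  set T := exp L - 1 with hT
  -- bound ‖T x‖ ≤ ‖L x‖
  have hbound : ∀ x : EuclideanSpace ℝ (Fin p), ‖T x‖ ≤ ‖L x‖ := by
    intro x
    have hcont : Continuous fun t : ℝ => exp (t • L) :=
      exp_continuous.comp (continuous_id.smul continuous_const)
    have hderiv : ∀ t ∈ Set.uIcc (0 : ℝ) 1,
        HasDerivAt (fun t : ℝ => exp (t • L) x) (exp (t • L) (L x)) t := by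
      intro t _
      have h := hasDerivAt_exp_smul_const (𝕂 := ℝ) L t
      have h2 := h.clm_apply (hasDerivAt_const t x)
      simpa [ContinuousLinearMap.mul_apply] using h2
    have hint : IntervalIntegrable (fun t : ℝ => exp (t • L) (L x))
        MeasureTheory.volume 0 1 := by
      apply Continuous.intervalIntegrable
      exact ((ContinuousLinearMap.apply ℝ (EuclideanSpace ℝ (Fin p)) (L x)).continuous).comp hcont
    have key : T x = ∫ t in (0:ℝ)..1, exp (t • L) (L x) := by
      rw [intervalIntegral.integral_eq_sub_of_hasDerivAt hderiv hint]
      have e0 : exp ((0:ℝ) • L) = 1 := by rw [show ((0:ℝ) • L) = 0 from zero_smul ℝ L, NormedSpace.exp_zero]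
      have e1 : exp ((1:ℝ) • L) = exp L := by rw [one_smul]
      simp [hT, e0, e1, ContinuousLinearMap.sub_apply, ContinuousLinearMap.one_apply]
    calc ‖T x‖ = ‖∫ t in (0:ℝ)..1, exp (t • L) (L x)‖ := by rw [key]
      _ ≤ ‖L x‖ * |1 - 0| :=
        intervalIntegral.norm_integral_le_of_norm_le_const fun t _ => le_of_eq (hiso t (L x))
      _ = ‖L x‖ := by simp
  have hnt : Nontrivial (EuclideanSpace ℝ (Fin p)) := by
    by_contra h
    rw [not_nontrivial_iff_subsingleton] at h
    have hL0 : L = 0 := ContinuousLinearMap.ext fun x => Subsingleton.elim _ _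
    rw [hL0, norm_zero] at h0
    exact lt_irrefl _ h0
  obtain ⟨x₀, hx₀S, hmax⟩ := (isCompact_sphere (0 : EuclideanSpace ℝ (Fin p)) 1).exists_isMaxOn
    (NormedSpace.sphere_nonempty.mpr zero_le_one) (T.continuous.norm.continuousOn)
  have hx₀ : ‖x₀‖ = 1 := mem_sphere_zero_iff_norm.mp hx₀S
  have hTle : ‖T‖ ≤ ‖T x₀‖ := by
    refine T.opNorm_le_bound (norm_nonneg _) fun x => ?_
    rcases eq_or_ne x 0 with rfl | hx
    · simp only [map_zero, norm_zero, mul_zero, le_refl]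
    · have hxn : ‖x‖ ≠ 0 := norm_ne_zero_iff.mpr hx
      have hyS : (‖x‖⁻¹ • x) ∈ Metric.sphere (0 : EuclideanSpace ℝ (Fin p)) 1 := by
        simp [mem_sphere_zero_iff_norm, norm_smul, Real.norm_eq_abs,
          abs_of_nonneg (inv_nonneg.mpr (norm_nonneg x)), inv_mul_cancel₀ hxn]
      have hm := hmax hyS
      simp only [Set.mem_setOf_eq, _root_.map_smul, norm_smul, Real.norm_eq_abs,
        abs_of_nonneg (inv_nonneg.mpr (norm_nonneg x))] at hm
      calc ‖T x‖ = ‖x‖ * (‖x‖⁻¹ * ‖T x‖) := by field_simp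
        _ ≤ ‖x‖ * ‖T x₀‖ := mul_le_mul_of_nonneg_left hm (norm_nonneg x)
        _ = ‖T x₀‖ * ‖x‖ := mul_comm _ _
  have hLx₀le : ‖L x₀‖ ≤ ‖L‖ := by
    calc ‖L x₀‖ ≤ ‖L‖ * ‖x₀‖ := L.le_opNorm x₀
      _ = ‖L‖ := by rw [hx₀, mul_one]
  rcases lt_or_eq_of_le hLx₀le with hlt | heq
  · exact lt_of_le_of_lt (hTle.trans (hbound x₀)) hlt
  · set a := ‖L‖ with ha
    have hadj : ∀ u v : EuclideanSpace ℝ (Fin p), ⟪L u, v⟫ = -⟪u, L v⟫ := by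
      intro u v
      have h1 : ⟪u, (ContinuousLinearMap.adjoint L) v⟫ = ⟪L u, v⟫ :=
        ContinuousLinearMap.adjoint_inner_right _ _ _
      rw [← h1, ← ContinuousLinearMap.star_eq_adjoint, hL]
      simp [inner_neg_right]
    have hinner0 : ⟪x₀, L x₀⟫ = 0 := by
      linarith [hadj x₀ x₀, real_inner_comm (L x₀) x₀]
    have hna : ⟪L (L x₀), x₀⟫ = -(a ^ 2) := by
      rw [hadj, real_inner_self_eq_norm_sq, heq]
    have hnorm2 : ‖L (L x₀)‖ ≤ a ^ 2 := by
      calc ‖L (L x₀)‖ ≤ ‖L‖ * ‖L x₀‖ := L.le_opNorm _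
        _ = a ^ 2 := by rw [heq]; ring
    have hzero : ‖L (L x₀) + (a ^ 2) • x₀‖ ^ 2 ≤ 0 := by
      have h5 : ‖(a ^ 2) • x₀‖ = a ^ 2 := by
        rw [norm_smul, hx₀, mul_one, Real.norm_eq_abs, abs_of_nonneg (sq_nonneg a)]
      rw [norm_add_sq_real, real_inner_smul_right, hna, h5]
      nlinarith [norm_nonneg (L (L x₀))]
    have hw0 : L (L x₀) + (a ^ 2) • x₀ = 0 := by
      have h6 : ‖L (L x₀) + (a ^ 2) • x₀‖ ^ 2 = 0 := le_antisymm hzero (sq_nonneg _)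
      have h7 : ‖L (L x₀) + (a ^ 2) • x₀‖ = 0 := by
        nlinarith [norm_nonneg (L (L x₀) + (a ^ 2) • x₀)]
      exact norm_eq_zero.mp h7
    have hL2 : L (L x₀) = (-(a ^ 2)) • x₀ := by
      have := eq_neg_of_add_eq_zero_left hw0
      rw [this, neg_smul]
    have hpow : ∀ k : ℕ, (L ^ (2 * k)) x₀ = ((-(a ^ 2)) ^ k) • x₀ ∧
        (L ^ (2 * k + 1)) x₀ = ((-(a ^ 2)) ^ k) • (L x₀) := by
      intro k
      induction k with
      | zero => simp
      | succ n ih =>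
        obtain ⟨_, ih2⟩ := ih
        have harith : 2 * (n + 1) = (2 * n + 1) + 1 := by ring
        have he : (L ^ (2 * (n + 1))) x₀ = ((-(a ^ 2)) ^ (n + 1)) • x₀ := by
          rw [harith, pow_succ', ContinuousLinearMap.mul_apply, ih2, _root_.map_smul, hL2,
            smul_smul, ← pow_succ]
        refine ⟨he, ?_⟩
        rw [pow_succ', ContinuousLinearMap.mul_apply, he, _root_.map_smul]
    have hcos : ⟪x₀, (exp L) x₀⟫ = Real.cos a := by
      have hsum : Summable fun n : ℕ => ((n.factorial : ℝ)⁻¹) • (L ^ n) :=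
        NormedSpace.expSeries_summable' (𝕂 := ℝ) L
      have h1 : HasSum (fun n : ℕ => ((n.factorial : ℝ)⁻¹) • (L ^ n)) (exp L) := by
        rw [NormedSpace.exp_eq_tsum ℝ]; exact hsum.hasSum
      have h2 := h1.mapL (ContinuousLinearMap.apply ℝ (EuclideanSpace ℝ (Fin p)) x₀)
      have h3 := h2.mapL (innerSL ℝ x₀)
      have h4 : HasSum (fun n : ℕ => ((n.factorial : ℝ)⁻¹) * ⟪x₀, (L ^ n) x₀⟫) ⟪x₀, (exp L) x₀⟫ := by
        refine h3.congr_fun fun n => ?_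
        simp [real_inner_smul_right]
      have hinj : Function.Injective (fun k : ℕ => 2 * k) := mul_right_injective₀ two_ne_zero
      have h5 : HasSum (fun n : ℕ => ((n.factorial : ℝ)⁻¹) * ⟪x₀, (L ^ n) x₀⟫)
          (Real.cos a) := by
        rw [← Function.Injective.hasSum_iff hinj ?_]
        · refine (Real.hasSum_cos a).congr_fun fun k => ?_
          show (((2 * k).factorial : ℝ)⁻¹) * ⟪x₀, (L ^ (2 * k)) x₀⟫ = (-1) ^ k * a ^ (2 * k) / ((2 * k).factorial : ℝ)
          rw [(hpow k).1, real_inner_smul_right, real_inner_self_eq_norm_sq, hx₀,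
            neg_pow, pow_mul]
          ring
        · intro n hn
          have hodd : ∃ k, n = 2 * k + 1 := by
            rcases Nat.even_or_odd n with ⟨k, hk⟩ | ⟨k, hk⟩
            · exact absurd ⟨k, show 2 * k = n by omega⟩ hn
            · exact ⟨k, by omega⟩
          obtain ⟨k, rfl⟩ := hodd
          show (((2 * k + 1).factorial : ℝ)⁻¹) * ⟪x₀, (L ^ (2 * k + 1)) x₀⟫ = 0
          rw [(hpow k).2, real_inner_smul_right, hinner0, mul_zero, mul_zero]
      exact h4.unique h5
    have hexp_norm : ‖(exp L) x₀‖ = 1 := by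
      have := hiso 1 x₀
      rwa [one_smul, hx₀] at this
    have hTx₀ : ‖T x₀‖ ^ 2 = 2 - 2 * Real.cos a := by
      have hTx : T x₀ = (exp L) x₀ - x₀ := by
        simp [hT, ContinuousLinearMap.sub_apply]
      rw [hTx, norm_sub_sq_real, hexp_norm, hx₀, real_inner_comm, hcos]
      ring
    have hcosb : 1 - a ^ 2 / 2 < Real.cos a := Real.one_sub_sq_div_two_lt_cos h0.ne'
    have hsq : ‖T x₀‖ ^ 2 < a ^ 2 := by rw [hTx₀]; nlinarith
    exact lt_of_le_of_lt hTle (lt_of_pow_lt_pow_left₀ 2 h0.le hsq)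

set_option maxHeartbeats 1000000 in
/-- if `C` is skew-symmetric with `0 < ‖C‖₂ < π`, then
`‖exp_m(C) − I‖₂ < ‖C‖₂`. -/
theorem stmt_5 (p : ℕ) (C : Matrix (Fin p) (Fin p) ℝ) (hC : Cᵀ = -C)
    (h0 : 0 < sNorm C) (hπ : sNorm C < Real.pi) :
    sNorm (NormedSpace.exp C - 1) < sNorm C := by
  classical
  set φ := Matrix.toEuclideanCLM (𝕜 := ℝ) (n := Fin p) with hφ
  have hsnorm : ∀ X : Matrix (Fin p) (Fin p) ℝ, sNorm X = ‖φ X‖ := by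
    intro X
    unfold sNorm
    congr 1
  have hstarC : star C = -C := by
    ext i j
    have := congrFun (congrFun hC i) j
    simpa [Matrix.star_apply, Matrix.transpose_apply] using this
  have hstarL : star (φ C) = -(φ C) := by
    rw [← map_star, hstarC, map_neg]
  have hexp : φ (NormedSpace.exp C) = NormedSpace.exp (φ C) := by
    have hsum : Summable fun n : ℕ => ((n.factorial : ℝ)⁻¹) • (φ C) ^ n :=
      NormedSpace.expSeries_summable' (𝕂 := ℝ) (φ C)
    have h1 : HasSum (fun n : ℕ => ((n.factorial : ℝ)⁻¹) • (φ C) ^ n)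
        (NormedSpace.exp (φ C)) := by
      rw [NormedSpace.exp_eq_tsum ℝ]; exact hsum.hasSum
    have hψlin : IsLinearMap ℝ ⇑φ.symm := ⟨map_add _, fun c x => _root_.map_smul _ c x⟩
    have hψcont : Continuous ⇑φ.symm :=
      (IsLinearMap.mk' _ hψlin).continuous_of_finiteDimensional
    have h2 := h1.map φ.symm hψcont
    have h3 : HasSum (fun n : ℕ => ((n.factorial : ℝ)⁻¹) • C ^ n)
        (φ.symm (NormedSpace.exp (φ C))) := by
      refine h2.congr_fun fun n => ?_
      simp [Function.comp, _root_.map_smul, map_pow]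
    have h4 : NormedSpace.exp C = φ.symm (NormedSpace.exp (φ C)) := by
      rw [NormedSpace.exp_eq_tsum ℝ]
      exact h3.tsum_eq
    rw [h4, StarAlgEquiv.apply_symm_apply]
  have h0' : 0 < ‖φ C‖ := by rw [← hsnorm]; exact h0
  have hmain := clm_aux (φ C) hstarL h0'
  have hsub : φ (NormedSpace.exp C - 1) = NormedSpace.exp (φ C) - 1 := by
    rw [map_sub, _root_.map_one, hexp]
  rw [hsnorm, hsnorm, hsub]
  exact hmain
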